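/- Let n = 3, let h satisfy hypotheses (H), and let k ≥ 1 be an integer. Then σ_(k)(g_h) < R λ_(k)/h(0)², where λ_(k) = k(k+1). -/

import Mathlib

open MeasureTheory Set

/-- Hypotheses (H): `h` is smooth on `[0,R]`, positive on `[0,R)`, `h(R)=0`,
`h'(R) = -1`, and all even-order derivatives of `h` vanish at `R`. -/
def SatisfiesH (R : ℝ) (h : ℝ → ℝ) : Prop :=
  ContDiffOn ℝ (⊤ : ℕ∞) h (Set.Icc 0 R) ∧
  (∀ r ∈ Set.Ico (0:ℝ) R, 0 < h r) ∧
  h R = 0 ∧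
  derivWithin h (Set.Icc 0 R) R = -1 ∧
  ∀ k : ℕ, iteratedDerivWithin (2 * k) h (Set.Icc 0 R) R = 0

/-- The `k`-th distinct eigenvalue `λ_(k) = k (n + k - 2)` of the Laplacian on the
round unit sphere `S^{n-1}`. -/
noncomputable def sphereEig (n k : ℕ) : ℝ := (k : ℝ) * ((n : ℝ) + (k : ℝ) - 2)

/-- The Rayleigh quotient
`R_λ(a; h) = (∫₀^R ((a')² h^{n-1} + λ a² h^{n-3}))/(a(0)² h(0)^{n-1})`. -/
noncomputable def rayleighQ (R : ℝ) (n : ℕ) (lam : ℝ) (h a : ℝ → ℝ) : ℝ :=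
  (∫ r in (0:ℝ)..R,
      (deriv a r) ^ 2 * h r ^ ((n : ℤ) - 1) + lam * (a r) ^ 2 * h r ^ ((n : ℤ) - 3)) /
    ((a 0) ^ 2 * h 0 ^ ((n : ℤ) - 1))

/-- Admissible test functions: Lipschitz on `[0,R]`, vanishing at `R`, nonzero at `0`. -/
def IsAdmissible (R : ℝ) (a : ℝ → ℝ) : Prop :=
  (∃ K : NNReal, LipschitzOnWith K a (Set.Icc 0 R)) ∧ a R = 0 ∧ a 0 ≠ 0

/-- The `k`-th distinct Steklov eigenvalue of the ball `[0,R] × S^{n-1}` with the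
revolution metric `g_h`, characterized variationally. -/
noncomputable def steklov (R : ℝ) (n k : ℕ) (h : ℝ → ℝ) : ℝ :=
  sInf { v : ℝ | ∃ a : ℝ → ℝ, IsAdmissible R a ∧ v = rayleighQ R n (sphereEig n k) h a }

/-- `a` is a minimizer realizing `σ_(k)(g_h)`. -/
def IsMinimizer (R : ℝ) (n k : ℕ) (h a : ℝ → ℝ) : Prop :=
  IsAdmissible R a ∧ rayleighQ R n (sphereEig n k) h a = steklov R n k h

private lemma cubic_int (R c : ℝ) : ∫ r in c..R, (R - r)^2 = (R - c)^3 / 3 := by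
  have key : ∀ x ∈ Set.uIcc c R, HasDerivAt (fun r => -(R - r)^3/3) ((R-x)^2) x := by
    intro x _
    have h1 : HasDerivAt (fun r : ℝ => (R - r)) (-1) x := (hasDerivAt_id x).const_sub R
    have h3 := (h1.pow 3).neg.div_const 3
    refine h3.congr_deriv ?_
    push_cast
    ring
  have hcont : IntervalIntegrable (fun r => (R - r)^2) volume c R := by
    apply ContinuousOn.intervalIntegrable
    fun_prop
  rw [intervalIntegral.integral_eq_sub_of_hasDerivAt key hcont]
  ring

set_option maxHeartbeats 1000000 in
theorem stmt_4 (R : ℝ) (hR : 0 < R) (h : ℝ → ℝ) (hH : SatisfiesH R h)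
    (k : ℕ) (hk : 1 ≤ k) :
    steklov R 3 k h < R * sphereEig 3 k / (h 0) ^ 2 ∧
    sphereEig 3 k = (k : ℝ) * ((k : ℝ) + 1) := by
  obtain ⟨hsm, hpos, hR0, hder, -⟩ := hH
  have hlam_eq : sphereEig 3 k = (k:ℝ) * ((k:ℝ)+1) := by
    unfold sphereEig; push_cast; ring
  refine ⟨?_, hlam_eq⟩
  set lam := sphereEig 3 k with hlamdef
  have hk1 : (1:ℝ) ≤ (k:ℝ) := by exact_mod_cast hk
  have hlam2 : (2:ℝ) ≤ lam := by rw [hlam_eq]; nlinarith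
  have hlam0 : (0:ℝ) ≤ lam := by linarith
  have h0pos : 0 < h 0 := hpos 0 ⟨le_refl _, hR⟩
  have hhnn : ∀ r ∈ Set.Icc (0:ℝ) R, 0 ≤ h r := by
    intro r hr
    rcases eq_or_lt_of_le hr.2 with he | hl
    · rw [he, hR0]
    · exact (hpos r ⟨hr.1, hl⟩).le
  have hexp2 : ∀ x : ℝ, x ^ (((3:ℕ):ℤ) - 1) = x ^ 2 := by
    intro x
    rw [show ((3:ℕ):ℤ) - 1 = ((2:ℕ):ℤ) by norm_num, zpow_natCast]
  have hexp0 : ∀ x : ℝ, x ^ (((3:ℕ):ℤ) - 3) = 1 := by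
    intro x
    rw [show ((3:ℕ):ℤ) - 3 = (0:ℤ) by norm_num, zpow_zero]
  -- derivative little-o at R
  have hd : HasDerivWithinAt h (-1) (Set.Icc 0 R) R := by
    have := ((hsm.differentiableOn (by simp)) R (Set.right_mem_Icc.2 hR.le)).hasDerivWithinAt
    rwa [hder] at this
  have hlo := (hasDerivWithinAt_iff_isLittleO.mp hd).bound (by norm_num : (0:ℝ) < 1/2)
  rw [eventually_nhdsWithin_iff, Metric.eventually_nhds_iff] at hlo
  obtain ⟨δ, hδ, hδo⟩ := hlo
  set ε := min (δ/2) R with hεdef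
  have hε : 0 < ε := lt_min (by linarith) hR
  have hεR : ε ≤ R := min_le_right _ _
  have hεδ : ε < δ := lt_of_le_of_lt (min_le_left _ _) (by linarith)
  have hRε0 : 0 ≤ R - ε := by linarith
  have hεle : R - ε ≤ R := by linarith
  have hkey : ∀ r ∈ Set.Icc (R - ε) R, h r ≤ 3/2 * (R - r) := by
    intro r hr
    have hr1 : r ∈ Set.Icc (0:ℝ) R := ⟨by linarith [hr.1], hr.2⟩
    have hdist : dist r R < δ := by
      rw [Real.dist_eq, abs_of_nonpos (by linarith [hr.2])]
      linarith [hr.1]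
    have hb := hδo hdist hr1
    rw [Real.norm_eq_abs, Real.norm_eq_abs, hR0] at hb
    simp only [sub_zero, smul_eq_mul, mul_neg_one, sub_neg_eq_add] at hb
    have habs : |r - R| = R - r := by
      rw [abs_of_nonpos (by linarith [hr.2])]; ring
    rw [habs] at hb
    have := (abs_le.mp hb).2
    linarith
  -- the test function
  set a := fun r : ℝ => min 1 (ε⁻¹ * (R - r)) with hadef
  have hinv0 : (0:ℝ) ≤ ε⁻¹ := inv_nonneg.2 hε.le
  have ha1 : ∀ r, r ≤ R - ε → a r = 1 := by
    intro r hr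
    have h1 : ε⁻¹ * ε ≤ ε⁻¹ * (R - r) := mul_le_mul_of_nonneg_left (by linarith) hinv0
    rw [inv_mul_cancel₀ hε.ne'] at h1
    exact min_eq_left h1
  have ha2 : ∀ r, R - ε ≤ r → a r = ε⁻¹ * (R - r) := by
    intro r hr
    have h1 : ε⁻¹ * (R - r) ≤ ε⁻¹ * ε := mul_le_mul_of_nonneg_left (by linarith) hinv0
    rw [inv_mul_cancel₀ hε.ne'] at h1
    exact min_eq_right h1
  have ha0 : a 0 = 1 := ha1 0 (by linarith)
  have haR : a R = 0 := by
    rw [ha2 R (by linarith)]; simp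
  have hlip : ∃ K : NNReal, LipschitzOnWith K a (Set.Icc 0 R) := by
    have l2 : LipschitzWith ⟨ε⁻¹, hinv0⟩ (fun r : ℝ => ε⁻¹ * (R - r)) := by
      apply LipschitzWith.of_dist_le_mul
      intro x y
      have he : ε⁻¹ * (R - x) - ε⁻¹ * (R - y) = ε⁻¹ * (y - x) := by ring
      rw [Real.dist_eq, Real.dist_eq, he, abs_mul, abs_of_nonneg hinv0, abs_sub_comm]
      exact le_rfl
    exact ⟨_, ((LipschitzWith.const 1).min l2).lipschitzOnWith⟩
  have hadm : IsAdmissible R a := ⟨hlip, haR, by rw [ha0]; norm_num⟩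
  -- derivative of a
  have hderiv1 : ∀ r, r < R - ε → deriv a r = 0 := by
    intro r hr
    have heq : a =ᶠ[nhds r] fun _ => 1 :=
      Filter.eventuallyEq_of_mem (Iio_mem_nhds hr) (fun x hx => ha1 x (le_of_lt hx))
    rw [heq.deriv_eq, deriv_const]
  have hderiv2 : ∀ r, R - ε < r → deriv a r = -ε⁻¹ := by
    intro r hr
    have heq : a =ᶠ[nhds r] fun x => ε⁻¹ * (R - x) :=
      Filter.eventuallyEq_of_mem (Ioi_mem_nhds hr) (fun x hx => ha2 x (le_of_lt hx))
    rw [heq.deriv_eq]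
    have hda : HasDerivAt (fun x : ℝ => ε⁻¹ * (R - x)) (-ε⁻¹) r := by
      have := ((hasDerivAt_id r).const_sub R).const_mul ε⁻¹
      simpa using this
    exact hda.deriv
  -- the integrand
  set F := fun r => (deriv a r)^2 * h r ^ (((3:ℕ):ℤ) - 1) + lam * a r ^ 2 * h r ^ (((3:ℕ):ℤ) - 3)
    with hFdef
  set g2 := fun r => ε⁻¹^2 * h r ^ 2 + lam * (ε⁻¹ * (R - r))^2 with hg2def
  have hFg2 : ∀ x ∈ Set.Ioc (R - ε) R, F x = g2 x := by
    intro x hx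
    rw [hFdef, hg2def]
    simp only
    rw [hderiv2 x hx.1, ha2 x hx.1.le, hexp2, hexp0]
    ring
  have haene : ∀ᵐ x : ℝ ∂(volume : Measure ℝ), x ≠ R - ε := by
    rw [MeasureTheory.ae_iff]
    have hs : {x : ℝ | ¬ x ≠ R - ε} = {R - ε} := by ext x; simp
    rw [hs]
    exact Real.volume_singleton
  have hFlam : ∀ x ∈ Set.Ioc (0:ℝ) (R - ε), x ≠ R - ε → F x = lam := by
    intro x hx hne
    have hlt : x < R - ε := lt_of_le_of_ne hx.2 hne
    rw [hFdef]
    simp only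
    rw [hderiv1 x hlt, ha1 x hlt.le, hexp2, hexp0]
    ring
  -- integrability
  have hF1 : IntervalIntegrable F volume 0 (R - ε) := by
    apply (intervalIntegrable_const (c := lam) (μ := volume)).congr_ae
    have hmem : ∀ᵐ x : ℝ ∂(volume.restrict (Set.uIoc (0:ℝ) (R - ε))), x ∈ Set.uIoc (0:ℝ) (R-ε) :=
      MeasureTheory.ae_restrict_mem measurableSet_uIoc
    have hne : ∀ᵐ x : ℝ ∂(volume.restrict (Set.uIoc (0:ℝ) (R - ε))), x ≠ R - ε :=
      haene.filter_mono (MeasureTheory.ae_mono MeasureTheory.Measure.restrict_le_self)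
    filter_upwards [hmem, hne] with x hx1 hx2
    rw [Set.uIoc_of_le hRε0] at hx1
    exact (hFlam x hx1 hx2).symm
  have hcontb : ContinuousOn (fun r => (9/4 + lam) * ε⁻¹^2 * (R - r)^2) (Set.uIcc (R-ε) R) := by
    fun_prop
  have hg2c : ContinuousOn g2 (Set.uIcc (R-ε) R) := by
    rw [Set.uIcc_of_le hεle]
    have hsub : Set.Icc (R - ε) R ⊆ Set.Icc 0 R := Set.Icc_subset_Icc (by linarith) le_rfl
    apply ContinuousOn.add
    · exact continuousOn_const.mul (((hsm.continuousOn).mono hsub).pow 2)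
    · exact (Continuous.continuousOn (by fun_prop))
  have hg2i : IntervalIntegrable g2 volume (R - ε) R := hg2c.intervalIntegrable
  have hF2 : IntervalIntegrable F volume (R - ε) R := by
    apply hg2i.congr_ae
    have hmem : ∀ᵐ x : ℝ ∂(volume.restrict (Set.uIoc (R-ε) R)), x ∈ Set.uIoc (R-ε) R :=
      MeasureTheory.ae_restrict_mem measurableSet_uIoc
    filter_upwards [hmem] with x hx
    rw [Set.uIoc_of_le hεle] at hx
    exact (hFg2 x hx).symm
  -- compute pieces
  have hI1 : (∫ r in (0:ℝ)..(R - ε), F r) = lam * (R - ε) := by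
    rw [intervalIntegral.integral_congr_ae (g := fun _ => lam) ?_]
    · rw [intervalIntegral.integral_const, smul_eq_mul]; ring
    · filter_upwards [haene] with x hx1 hx2
      rw [Set.uIoc_of_le hRε0] at hx2
      exact hFlam x hx2 hx1
  have hI2eq : (∫ r in (R - ε)..R, F r) = ∫ r in (R - ε)..R, g2 r := by
    apply intervalIntegral.integral_congr_ae
    apply Filter.Eventually.of_forall
    intro x hx
    rw [Set.uIoc_of_le hεle] at hx
    exact hFg2 x hx
  have hI2le : (∫ r in (R - ε)..R, g2 r) ≤ (9/4 + lam) * ε⁻¹^2 * (ε^3/3) := by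
    have hmono := intervalIntegral.integral_mono_on hεle hg2i hcontb.intervalIntegrable ?_
    · calc (∫ r in (R - ε)..R, g2 r)
          ≤ ∫ r in (R - ε)..R, (9/4 + lam) * ε⁻¹^2 * (R - r)^2 := hmono
        _ = (9/4 + lam) * ε⁻¹^2 * ∫ r in (R - ε)..R, (R - r)^2 :=
            intervalIntegral.integral_const_mul _ _
        _ = (9/4 + lam) * ε⁻¹^2 * (ε^3/3) := by
            rw [cubic_int]; ring_nf
    · intro r hr
      have hnn : 0 ≤ h r := hhnn r ⟨by linarith [hr.1], hr.2⟩
      have h1 : h r ^ 2 ≤ (3/2 * (R - r))^2 := pow_le_pow_left₀ hnn (hkey r hr) 2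
      have h2 := mul_le_mul_of_nonneg_left h1 (sq_nonneg ε⁻¹)
      rw [hg2def]
      simp only
      nlinarith [mul_nonneg (sq_nonneg ε⁻¹) (sq_nonneg (R - r))]
  have hinveps : ε⁻¹^2 * (ε^3/3) = ε/3 := by
    field_simp
  have hnum : (∫ r in (0:ℝ)..R, F r) < lam * R := by
    rw [← intervalIntegral.integral_add_adjacent_intervals hF1 hF2, hI1, hI2eq]
    have : (9/4 + lam) * ε⁻¹^2 * (ε^3/3) = (9/4 + lam) * (ε/3) := by
      rw [mul_assoc, hinveps]
    nlinarith [hI2le]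
  -- Rayleigh quotient of a
  have hray : rayleighQ R 3 lam h a < R * lam / h 0 ^ 2 := by
    unfold rayleighQ
    rw [ha0, hexp2 (h 0), one_pow, one_mul]
    rw [div_lt_div_iff₀ (by positivity) (by positivity)]
    have hFint : (∫ r in (0:ℝ)..R,
        (deriv a r)^2 * h r ^ (((3:ℕ):ℤ) - 1) + lam * a r ^ 2 * h r ^ (((3:ℕ):ℤ) - 3))
        = ∫ r in (0:ℝ)..R, F r := by rw [hFdef]
    rw [hFint]
    nlinarith [pow_pos h0pos 2, hnum]
  -- bounded below
  have hbdd : BddBelow {v : ℝ | ∃ b : ℝ → ℝ, IsAdmissible R b ∧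
      v = rayleighQ R 3 (sphereEig 3 k) h b} := by
    refine ⟨0, ?_⟩
    rintro v ⟨b, hb, rfl⟩
    unfold rayleighQ
    apply div_nonneg
    · apply intervalIntegral.integral_nonneg hR.le
      intro u _
      rw [hexp2, hexp0]
      have h1 := mul_nonneg hlam0 (sq_nonneg (b u))
      nlinarith [mul_nonneg (sq_nonneg (deriv b u)) (sq_nonneg (h u))]
    · rw [hexp2]
      positivity
  have hle : steklov R 3 k h ≤ rayleighQ R 3 lam h a := by
    unfold steklov
    exact csInf_le hbdd ⟨a, hadm, rfl⟩
  calc steklov R 3 k h ≤ rayleighQ R 3 lam h a := hle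
    _ < R * lam / h 0 ^ 2 := hray
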